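/- Let m₀, i : ℝ → ℝ → ℝ be continuous with i ≥ 0, m₁ : ℝ → ℝ → ℝ → ℝ be continuous, and S₀ : ℝ → ℝ. Define S(t,a) := S₀(t−a)·exp(−∫₀ᵃ (m₀(t−a+τ,τ) + i(t−a+τ,τ)) dτ), M₁(t,a,d) := ∫₀^d m₁(t−d+τ, a−d+τ, τ) dτ, C(t,a,d) := i(t−d, a−d)·S(t−d, a−d)·exp(−M₁(t,a,d)), C⋆(t,a) := ∫₀ᵃ C(t,a,δ) dδ, the prevalence p(t,a) := C⋆(t,a)/(C⋆(t,a) + S(t,a)), and ℳ_{t,a}(y) := exp(−∫₀^y (m₀(t−a+τ,τ) + i(t−a+τ,τ)) dτ). Then for every t ∈ ℝ and a ≥ 0 with S₀(t−a) > 0, Keiding's equation holds: p(t,a)/(1 − p(t,a)) = (∫₀ᵃ ℳ_{t,a}(y)·i(t−a+y, y)·exp(−∫_y^a m₁(t−a+τ, τ, τ−y) dτ) dy) / ℳ_{t,a}(a). -/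

import Mathlib

/-- Keiding's equation for the prevalence odds:
`p(t,a)/(1−p(t,a)) = (∫₀ᵃ ℳ_{t,a}(y)·i(t−a+y,y)·exp(−∫_y^a m₁(t−a+τ,τ,τ−y) dτ) dy) / ℳ_{t,a}(a)`. -/
theorem keiding_equation
    (m₀ i : ℝ → ℝ → ℝ)
    (hm₀ : Continuous fun q : ℝ × ℝ => m₀ q.1 q.2)
    (hi : Continuous fun q : ℝ × ℝ => i q.1 q.2)
    (hi_nonneg : ∀ t a : ℝ, 0 ≤ i t a)
    (m₁ : ℝ → ℝ → ℝ → ℝ)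
    (hm₁ : Continuous fun q : ℝ × ℝ × ℝ => m₁ q.1 q.2.1 q.2.2)
    (S₀ : ℝ → ℝ) (S : ℝ → ℝ → ℝ)
    (hS : ∀ t a : ℝ, S t a = S₀ (t - a) *
      Real.exp (-∫ τ in (0:ℝ)..a, (m₀ (t - a + τ) τ + i (t - a + τ) τ)))
    (M₁ : ℝ → ℝ → ℝ → ℝ)
    (hM₁ : ∀ t a d : ℝ, M₁ t a d =
      ∫ τ in (0:ℝ)..d, m₁ (t - d + τ) (a - d + τ) τ)
    (C : ℝ → ℝ → ℝ → ℝ)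
    (hC : ∀ t a d : ℝ, C t a d =
      i (t - d) (a - d) * S (t - d) (a - d) * Real.exp (-M₁ t a d))
    (Cstar : ℝ → ℝ → ℝ)
    (hCstar : ∀ t a : ℝ, Cstar t a = ∫ δ in (0:ℝ)..a, C t a δ)
    (p : ℝ → ℝ → ℝ)
    (hp : ∀ t a : ℝ, p t a = Cstar t a / (Cstar t a + S t a))
    (M : ℝ → ℝ → ℝ → ℝ)
    (hM : ∀ t a y : ℝ, M t a y =
      Real.exp (-∫ τ in (0:ℝ)..y, (m₀ (t - a + τ) τ + i (t - a + τ) τ))) :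
    ∀ t a : ℝ, 0 ≤ a → 0 < S₀ (t - a) →
      p t a / (1 - p t a) =
        (∫ y in (0:ℝ)..a, M t a y * i (t - a + y) y *
          Real.exp (-∫ τ in y..a, m₁ (t - a + τ) τ (τ - y))) / M t a a := by
  intro t a ha hpos
  have hS' : S t a = S₀ (t - a) * M t a a := by rw [hS, hM]
  have hEpos : 0 < M t a a := by rw [hM]; exact Real.exp_pos _
  have hSpos : 0 < S t a := by rw [hS']; exact mul_pos hpos hEpos
  -- rewrite C t a δ in terms of y := a - δ data
  have hCy : ∀ δ : ℝ, C t a δ = S₀ (t - a) *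
      (M t a (a - δ) * i (t - a + (a - δ)) (a - δ) *
        Real.exp (-∫ τ in (a - δ)..a, m₁ (t - a + τ) τ (τ - (a - δ)))) := by
    intro δ
    have hMsub : M₁ t a δ = ∫ τ in (a - δ)..a, m₁ (t - a + τ) τ (τ - (a - δ)) := by
      rw [hM₁]
      have h := intervalIntegral.integral_comp_add_right (a := (0:ℝ)) (b := δ)
        (fun τ => m₁ (t - a + τ) τ (τ - (a - δ))) (a - δ)
      rw [show (0:ℝ) + (a - δ) = a - δ by ring, show δ + (a - δ) = a by ring] at h
      rw [← h]
      apply intervalIntegral.integral_congr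
      intro τ _
      simp only
      have e1 : t - a + (τ + (a - δ)) = t - δ + τ := by ring
      have e2 : τ + (a - δ) = a - δ + τ := by ring
      have e3 : τ + (a - δ) - (a - δ) = τ := by ring
      rw [e1, e3, e2]
    have e1 : t - δ - (a - δ) = t - a := by ring
    have e2 : t - a + (a - δ) = t - δ := by ring
    rw [hC, hS, hMsub, hM, e1, ← e2]
    ring
  have hCnn : 0 ≤ Cstar t a := by
    rw [hCstar]
    apply intervalIntegral.integral_nonneg ha
    intro δ _
    rw [hCy δ]
    have hMpos : (0:ℝ) < M t a (a - δ) := by rw [hM]; exact Real.exp_pos _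
    exact mul_nonneg hpos.le (mul_nonneg
      (mul_nonneg hMpos.le (hi_nonneg _ _)) (Real.exp_pos _).le)
  have hCs : Cstar t a = S₀ (t - a) * ∫ y in (0:ℝ)..a, M t a y * i (t - a + y) y *
      Real.exp (-∫ τ in y..a, m₁ (t - a + τ) τ (τ - y)) := by
    rw [hCstar]
    have h := intervalIntegral.integral_comp_sub_left (a := (0:ℝ)) (b := a)
      (fun δ => C t a δ) a
    rw [show a - a = (0:ℝ) by ring, sub_zero] at h
    rw [← h, ← intervalIntegral.integral_const_mul]
    apply intervalIntegral.integral_congr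
    intro y _
    simp only
    rw [hCy (a - y), show a - (a - y) = y by ring]
  -- finish
  have hIpos : 0 ≤ ∫ y in (0:ℝ)..a, M t a y * i (t - a + y) y *
      Real.exp (-∫ τ in y..a, m₁ (t - a + τ) τ (τ - y)) :=
    nonneg_of_mul_nonneg_right (by rw [← hCs]; exact hCnn) hpos
  have hsum : 0 < Cstar t a + S t a := by linarith
  rw [hp]
  have h2 : 1 - Cstar t a / (Cstar t a + S t a) = S t a / (Cstar t a + S t a) := by
    field_simp
    ring
  rw [h2]
  have h3 : Cstar t a / (Cstar t a + S t a) / (S t a / (Cstar t a + S t a)) =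
      Cstar t a / S t a := by
    have hne : Cstar t a + S t a ≠ 0 := hsum.ne'
    have hne2 : S t a ≠ 0 := hSpos.ne'
    field_simp
  rw [h3, hCs, hS']
  exact mul_div_mul_left _ _ hpos.ne'
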